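/- Let u : 𝒫_β(ℝ^d) → ℝ admit a linear derivative δu/δm such that for each μ the map v ↦ (δu/δm)(μ)(v) is C¹ with ∂_v(δu/δm) jointly continuous on 𝒫_β(ℝ^d) × ℝ^d. Then for each N ≥ 1 the empirical projection u^N(x₁,…,x_N) := u((1/N)∑_{j=1}^N δ_{x_j}) is C¹ on (ℝ^d)^N, and ∂_{x_i} u^N(x₁,…,x_N) = (1/N) ∂_v (δu/δm)(μ̄^N_x)(x_i) for every i, where μ̄^N_x = (1/N)∑_j δ_{x_j}. -/

import Mathlib

open MeasureTheory Real ENNReal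

/-- Membership in `𝒫_β(ℝ^d)`: probability measure with finite `β`-moment. -/
def Pmem (d : ℕ) (β : ℝ) (μ : Measure (EuclideanSpace ℝ (Fin d))) : Prop :=
  IsProbabilityMeasure μ ∧ Integrable (fun x => ‖x‖ ^ β) μ

/-- The `β`-Wasserstein distance, as the infimum of transport costs over couplings. -/
noncomputable def Wbeta (d : ℕ) (β : ℝ) (μ ν : Measure (EuclideanSpace ℝ (Fin d))) : ℝ :=
  sInf {r : ℝ | ∃ pi : Measure (EuclideanSpace ℝ (Fin d) × EuclideanSpace ℝ (Fin d)),
    pi.map Prod.fst = μ ∧ pi.map Prod.snd = ν ∧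
    r = (∫ p, ‖p.1 - p.2‖ ^ β ∂pi) ^ (1 / β)}

/-- The convex combination `t μ + (1-t) ν` of two measures. -/
noncomputable def mix {X : Type*} [MeasurableSpace X] (t : ℝ) (μ ν : Measure X) : Measure X :=
  ENNReal.ofReal t • μ + ENNReal.ofReal (1 - t) • ν

/-- The empirical measure `μ̄^N_x = (1/N) ∑ δ_{x_k}`. -/
noncomputable def emp {d N : ℕ} (x : Fin N → EuclideanSpace ℝ (Fin d)) :
    Measure (EuclideanSpace ℝ (Fin d)) :=
  (N : ℝ≥0∞)⁻¹ • ∑ k : Fin N, Measure.dirac (x k)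

section Helpers

variable {X : Type*} [MeasurableSpace X] [MeasurableSingletonClass X]

lemma integrable_dirac' (f : X → ℝ) (a : X) : Integrable f (Measure.dirac a) := by
  have h : f =ᵐ[Measure.dirac a] (fun _ => f a) := by
    rw [Filter.EventuallyEq, MeasureTheory.ae_dirac_eq]
    exact Filter.eventually_pure.2 rfl
  exact (integrable_const (f a)).congr h.symm

lemma integrable_discrete {N : ℕ} (hN : N ≠ 0) (p : Fin N → X) (f : X → ℝ) :
    Integrable f ((N : ℝ≥0∞)⁻¹ • ∑ k : Fin N, Measure.dirac (p k)) := by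
  refine Integrable.smul_measure ?_ (by simp [hN])
  exact integrable_finset_sum_measure.2 fun k _ => integrable_dirac' f (p k)

lemma integral_discrete {N : ℕ} (p : Fin N → X) (f : X → ℝ) :
    ∫ v, f v ∂((N : ℝ≥0∞)⁻¹ • ∑ k : Fin N, Measure.dirac (p k)) =
      (N : ℝ)⁻¹ * ∑ k : Fin N, f (p k) := by
  rw [integral_smul_measure,
    integral_finset_sum_measure (fun k _ => integrable_dirac' f (p k))]
  simp [integral_dirac, smul_eq_mul]

omit [MeasurableSingletonClass X] in
lemma map_discrete {Y : Type*} [MeasurableSpace Y] {N : ℕ} (p : Fin N → X) {g : X → Y}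
    (hg : Measurable g) :
    ((N : ℝ≥0∞)⁻¹ • ∑ k : Fin N, Measure.dirac (p k)).map g =
      (N : ℝ≥0∞)⁻¹ • ∑ k : Fin N, Measure.dirac (g (p k)) := by
  rw [Measure.map_smul]
  congr 1
  induction (Finset.univ : Finset (Fin N)) using Finset.induction with
  | empty => simp
  | insert _ _ h ih => rw [Finset.sum_insert h, Measure.map_add _ _ hg, ih, Finset.sum_insert h,
      Measure.map_dirac' hg]

end Helpers

lemma integral_emp {d N : ℕ} (x : Fin N → EuclideanSpace ℝ (Fin d))
    (f : EuclideanSpace ℝ (Fin d) → ℝ) :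
    ∫ v, f v ∂(emp x) = (N : ℝ)⁻¹ * ∑ k : Fin N, f (x k) :=
  integral_discrete x f

lemma pmem_emp {d N : ℕ} (hN : N ≠ 0) {β : ℝ} (x : Fin N → EuclideanSpace ℝ (Fin d)) :
    Pmem d β (emp x) := by
  constructor
  · constructor
    show emp x Set.univ = 1
    rw [emp, Measure.smul_apply]
    rw [show ((∑ k : Fin N, Measure.dirac (x k)) Set.univ)
        = ∑ k : Fin N, Measure.dirac (x k) Set.univ from by
        rw [Measure.finset_sum_apply]]
    simp only [Measure.dirac_apply_of_mem (Set.mem_univ _), Finset.sum_const,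
      Finset.card_univ, Fintype.card_fin, nsmul_eq_mul, mul_one, smul_eq_mul]
    exact ENNReal.inv_mul_cancel (by exact_mod_cast hN) (natCast_ne_top N)
  · exact integrable_discrete hN x _

lemma pmem_mix {d N : ℕ} (hN : N ≠ 0) {β t : ℝ} (ht0 : 0 ≤ t) (ht1 : t ≤ 1)
    (y x : Fin N → EuclideanSpace ℝ (Fin d)) :
    Pmem d β (mix t (emp y) (emp x)) := by
  have h1 : IsProbabilityMeasure (emp (d := d) y) := (pmem_emp hN (β := β) y).1
  have h2 : IsProbabilityMeasure (emp (d := d) x) := (pmem_emp hN (β := β) x).1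
  constructor
  · constructor
    show (mix t (emp y) (emp x)) Set.univ = 1
    rw [mix, Measure.add_apply, Measure.smul_apply, Measure.smul_apply,
      measure_univ, measure_univ, smul_eq_mul, mul_one, smul_eq_mul, mul_one,
      ← ENNReal.ofReal_add ht0 (by linarith), show t + (1 - t) = 1 by ring,
      ENNReal.ofReal_one]
  · exact ((integrable_discrete hN y _).smul_measure ofReal_ne_top).add_measure
      ((integrable_discrete hN x _).smul_measure ofReal_ne_top)

lemma wbeta_nonneg_mem {d : ℕ} {β : ℝ}
    {μ ν : Measure (EuclideanSpace ℝ (Fin d))} :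
    ∀ r ∈ {r : ℝ | ∃ pi : Measure (EuclideanSpace ℝ (Fin d) × EuclideanSpace ℝ (Fin d)),
      pi.map Prod.fst = μ ∧ pi.map Prod.snd = ν ∧
      r = (∫ p, ‖p.1 - p.2‖ ^ β ∂pi) ^ (1 / β)}, (0:ℝ) ≤ r := by
  rintro r ⟨pi, -, -, rfl⟩
  exact Real.rpow_nonneg (integral_nonneg fun p => Real.rpow_nonneg (norm_nonneg _) β) _

lemma wbeta_le_main {d N : ℕ} (hN : N ≠ 0) {β : ℝ} (hβ : 1 ≤ β)
    (a b : Fin N → EuclideanSpace ℝ (Fin d)) (s r c M : ℝ)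
    (hs : 0 ≤ s) (hr : 0 ≤ r) (hc : 0 ≤ c) (hM : 0 ≤ M) (hab : ∀ k, ‖a k - b k‖ ≤ M) :
    Wbeta d β (ENNReal.ofReal (s+c) • emp a + ENNReal.ofReal r • emp b)
      (ENNReal.ofReal s • emp a + ENNReal.ofReal (r+c) • emp b) ≤ c ^ (1/β) * M := by
  have hβ0 : (0:ℝ) < β := lt_of_lt_of_le one_pos hβ
  set P : (Fin N → EuclideanSpace ℝ (Fin d)) → (Fin N → EuclideanSpace ℝ (Fin d)) →
      Measure (EuclideanSpace ℝ (Fin d) × EuclideanSpace ℝ (Fin d)) :=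
    fun u v => (N : ℝ≥0∞)⁻¹ • ∑ k : Fin N, Measure.dirac (u k, v k) with hP
  have h1 : ∀ (u v : Fin N → EuclideanSpace ℝ (Fin d)) (w : ℝ),
      (ENNReal.ofReal w • P u v).map Prod.fst = ENNReal.ofReal w • emp u := by
    intro u v w
    rw [Measure.map_smul, hP, map_discrete _ measurable_fst]; rfl
  have h2 : ∀ (u v : Fin N → EuclideanSpace ℝ (Fin d)) (w : ℝ),
      (ENNReal.ofReal w • P u v).map Prod.snd = ENNReal.ofReal w • emp v := by
    intro u v w
    rw [Measure.map_smul, hP, map_discrete _ measurable_snd]; rfl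
  set pi : Measure (EuclideanSpace ℝ (Fin d) × EuclideanSpace ℝ (Fin d)) :=
    ENNReal.ofReal s • P a a + ENNReal.ofReal r • P b b + ENNReal.ofReal c • P a b with hpi
  have hfst : pi.map Prod.fst = ENNReal.ofReal (s+c) • emp a + ENNReal.ofReal r • emp b := by
    rw [hpi, Measure.map_add _ _ measurable_fst, Measure.map_add _ _ measurable_fst,
      h1, h1, h1, add_right_comm, ← add_smul, ← ENNReal.ofReal_add hs hc]
  have hsnd : pi.map Prod.snd = ENNReal.ofReal s • emp a + ENNReal.ofReal (r+c) • emp b := by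
    rw [hpi, Measure.map_add _ _ measurable_snd, Measure.map_add _ _ measurable_snd,
      h2, h2, h2, add_assoc, ← add_smul, ← ENNReal.ofReal_add hr hc]
  set f : EuclideanSpace ℝ (Fin d) × EuclideanSpace ℝ (Fin d) → ℝ :=
    fun p => ‖p.1 - p.2‖ ^ β with hf
  have hintegrable : ∀ (u v : Fin N → EuclideanSpace ℝ (Fin d)) (w : ℝ),
      Integrable f (ENNReal.ofReal w • P u v) :=
    fun u v w => (integrable_discrete hN (fun k => (u k, v k)) f).smul_measure ofReal_ne_top
  have hws : ∀ (u v : Fin N → EuclideanSpace ℝ (Fin d)) (w : ℝ), 0 ≤ w →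
      ∫ p, f p ∂(ENNReal.ofReal w • P u v) =
        w * ((N : ℝ)⁻¹ * ∑ k : Fin N, ‖u k - v k‖ ^ β) := by
    intro u v w hw
    rw [integral_smul_measure, ENNReal.toReal_ofReal hw, hP]
    rw [integral_discrete (fun k => (u k, v k)) f, smul_eq_mul]
  have hI : ∫ p, f p ∂pi = c * ((N : ℝ)⁻¹ * ∑ k : Fin N, ‖a k - b k‖ ^ β) := by
    rw [hpi, integral_add_measure ((hintegrable a a s).add_measure (hintegrable b b r))
        (hintegrable a b c),
      integral_add_measure (hintegrable a a s) (hintegrable b b r),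
      hws a a s hs, hws b b r hr, hws a b c hc]
    simp [Real.zero_rpow (ne_of_gt hβ0)]
  have hI0 : 0 ≤ ∫ p, f p ∂pi :=
    integral_nonneg fun p => Real.rpow_nonneg (norm_nonneg _) β
  have hIle : ∫ p, f p ∂pi ≤ c * M ^ β := by
    rw [hI]
    have hsum : ∑ k : Fin N, ‖a k - b k‖ ^ β ≤ (N : ℝ) * M ^ β := by
      calc ∑ k : Fin N, ‖a k - b k‖ ^ β ≤ ∑ _k : Fin N, M ^ β :=
            Finset.sum_le_sum fun k _ => Real.rpow_le_rpow (norm_nonneg _) (hab k) (le_of_lt hβ0)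
        _ = (N : ℝ) * M ^ β := by simp [mul_comm]
    have hNpos : (0:ℝ) < N := by positivity
    calc c * ((N : ℝ)⁻¹ * ∑ k : Fin N, ‖a k - b k‖ ^ β)
        ≤ c * ((N : ℝ)⁻¹ * ((N : ℝ) * M ^ β)) := by
          apply mul_le_mul_of_nonneg_left _ hc
          exact mul_le_mul_of_nonneg_left hsum (by positivity)
      _ = c * M ^ β := by field_simp
  have hmem : (∫ p, f p ∂pi) ^ (1/β) ∈ {q : ℝ |
      ∃ pi' : Measure (EuclideanSpace ℝ (Fin d) × EuclideanSpace ℝ (Fin d)),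
      pi'.map Prod.fst = ENNReal.ofReal (s+c) • emp a + ENNReal.ofReal r • emp b ∧
      pi'.map Prod.snd = ENNReal.ofReal s • emp a + ENNReal.ofReal (r+c) • emp b ∧
      q = (∫ p, ‖p.1 - p.2‖ ^ β ∂pi') ^ (1 / β)} := ⟨pi, hfst, hsnd, rfl⟩
  have hle := csInf_le ⟨0, wbeta_nonneg_mem⟩ hmem
  refine hle.trans ?_
  calc (∫ p, f p ∂pi) ^ (1/β) ≤ (c * M ^ β) ^ (1/β) :=
        Real.rpow_le_rpow hI0 hIle (by positivity)
    _ = c ^ (1/β) * (M ^ β) ^ (1/β) := Real.mul_rpow hc (by positivity)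
    _ = c ^ (1/β) * M := by
        rw [← Real.rpow_mul hM, mul_one_div_cancel (ne_of_gt hβ0), Real.rpow_one]

lemma wbeta_emp_mix {d N : ℕ} (hN : N ≠ 0) {β : ℝ} (hβ : 1 ≤ β)
    (x y : Fin N → EuclideanSpace ℝ (Fin d)) {t M : ℝ}
    (ht0 : 0 ≤ t) (ht1 : t ≤ 1) (hM : 0 ≤ M) (hab : ∀ k, ‖x k - y k‖ ≤ M) :
    Wbeta d β (emp x) (mix t (emp y) (emp x)) ≤ M := by
  have key := wbeta_le_main hN hβ x y (1 - t) 0 t M (by linarith) le_rfl ht0 hM hab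
  rw [show (1 - t) + t = 1 by ring] at key
  simp only [ENNReal.ofReal_one, one_smul, ENNReal.ofReal_zero, zero_smul, add_zero,
    zero_add] at key
  rw [show mix t (emp y) (emp x)
      = ENNReal.ofReal (1 - t) • emp x + ENNReal.ofReal t • emp y from by
    rw [mix, add_comm]]
  refine key.trans ?_
  calc t ^ (1/β) * M ≤ 1 * M :=
        mul_le_mul_of_nonneg_right
          (Real.rpow_le_one ht0 ht1 (one_div_nonneg.2 (by linarith))) hM
    _ = M := one_mul M

lemma wbeta_emp_emp {d N : ℕ} (hN : N ≠ 0) {β : ℝ} (hβ : 1 ≤ β)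
    (a b : Fin N → EuclideanSpace ℝ (Fin d)) {M : ℝ}
    (hM : 0 ≤ M) (hab : ∀ k, ‖a k - b k‖ ≤ M) :
    Wbeta d β (emp a) (emp b) ≤ M := by
  have key := wbeta_le_main hN hβ a b 0 0 1 M le_rfl le_rfl zero_le_one hM hab
  simp only [zero_add, ENNReal.ofReal_one, one_smul, ENNReal.ofReal_zero, zero_smul,
    add_zero, Real.one_rpow, one_mul] at key
  exact key

lemma wbeta_mix_mix {d N : ℕ} (hN : N ≠ 0) {β : ℝ} (hβ : 1 ≤ β)
    (x y : Fin N → EuclideanSpace ℝ (Fin d)) {t₀ t M : ℝ}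
    (ht₀0 : 0 ≤ t₀) (ht₀1 : t₀ ≤ 1) (ht0 : 0 ≤ t) (ht1 : t ≤ 1)
    (hM : 0 ≤ M) (hab : ∀ k, ‖x k - y k‖ ≤ M) :
    Wbeta d β (mix t₀ (emp y) (emp x)) (mix t (emp y) (emp x)) ≤ |t - t₀| ^ (1/β) * M := by
  rcases le_total t t₀ with h | h
  · have key := wbeta_le_main hN hβ y x t (1 - t₀) (t₀ - t) M ht0 (by linarith) (by linarith) hM
      (fun k => by rw [norm_sub_rev]; exact hab k)
    rw [show t + (t₀ - t) = t₀ by ring, show (1 - t₀) + (t₀ - t) = 1 - t by ring] at key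
    rw [show |t - t₀| = t₀ - t from by rw [abs_sub_comm]; exact abs_of_nonneg (by linarith)]
    exact key
  · have key := wbeta_le_main hN hβ x y (1 - t) t₀ (t - t₀) M (by linarith) ht₀0 (by linarith) hM
      hab
    rw [show (1 - t) + (t - t₀) = 1 - t₀ by ring, show t₀ + (t - t₀) = t by ring] at key
    rw [show |t - t₀| = t - t₀ from abs_of_nonneg (by linarith),
      show mix t₀ (emp y) (emp x)
        = ENNReal.ofReal (1 - t₀) • emp x + ENNReal.ofReal t₀ • emp y from by
          rw [mix, add_comm],
      show mix t (emp y) (emp x)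
        = ENNReal.ofReal (1 - t) • emp x + ENNReal.ofReal t • emp y from by
          rw [mix, add_comm]]
    exact key

/-- If `u` has a linear derivative `D` whose `v`-gradient is jointly continuous, then the
empirical projection `x ↦ u(μ̄^N_x)` is `C¹` and
`∂_{x_i} u^N(x) = (1/N) ∂_v D(μ̄^N_x)(x_i)`. -/
theorem empirical_projection_C1 (d N : ℕ) (hd : 1 ≤ d) (hN : 1 ≤ N)
    (β : ℝ) (hβ1 : 1 ≤ β) (hβ2 : β ≤ 2)
    (u : Measure (EuclideanSpace ℝ (Fin d)) → ℝ)
    (D : Measure (EuclideanSpace ℝ (Fin d)) → EuclideanSpace ℝ (Fin d) → ℝ)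
    (hDcont : ∀ μ, Pmem d β μ → ∀ v : EuclideanSpace ℝ (Fin d), ∀ ε : ℝ, 0 < ε →
      ∃ δ : ℝ, 0 < δ ∧ ∀ ν, Pmem d β ν → ∀ v' : EuclideanSpace ℝ (Fin d),
        Wbeta d β μ ν < δ → ‖v' - v‖ < δ → |D ν v' - D μ v| < ε)
    (hgrowth : ∀ μ, Pmem d β μ → ∃ Cμ : ℝ, ∀ v, |D μ v| ≤ Cμ * (1 + ‖v‖ ^ β))
    (hLin : ∀ μ ν, Pmem d β μ → Pmem d β ν →
      u μ - u ν = ∫ t in (0:ℝ)..1,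
        ((∫ v, D (mix t μ ν) v ∂μ) - ∫ v, D (mix t μ ν) v ∂ν))
    (hDdiff : ∀ μ, Pmem d β μ → Differentiable ℝ (D μ))
    (hDVcont : ∀ μ, Pmem d β μ → ∀ v : EuclideanSpace ℝ (Fin d), ∀ ε : ℝ, 0 < ε →
      ∃ δ : ℝ, 0 < δ ∧ ∀ ν, Pmem d β ν → ∀ v' : EuclideanSpace ℝ (Fin d),
        Wbeta d β μ ν < δ → ‖v' - v‖ < δ →
          ‖fderiv ℝ (D ν) v' - fderiv ℝ (D μ) v‖ < ε) :
    ContDiff ℝ 1 (fun x : Fin N → EuclideanSpace ℝ (Fin d) => u (emp x)) ∧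
    ∀ x : Fin N → EuclideanSpace ℝ (Fin d),
      HasFDerivAt (fun y : Fin N → EuclideanSpace ℝ (Fin d) => u (emp y))
        (∑ i : Fin N, ((N : ℝ)⁻¹ • fderiv ℝ (D (emp x)) (x i)).comp
          (ContinuousLinearMap.proj (R := ℝ) (φ := fun _ : Fin N => EuclideanSpace ℝ (Fin d)) i))
        x := by
  haveI : Nonempty (Fin N) := ⟨⟨0, hN⟩⟩
  have hN0 : N ≠ 0 := Nat.one_le_iff_ne_zero.mp hN
  have hNR : (N : ℝ) ≠ 0 := Nat.cast_ne_zero.mpr hN0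
  set L : (Fin N → EuclideanSpace ℝ (Fin d)) →
      ((Fin N → EuclideanSpace ℝ (Fin d)) →L[ℝ] ℝ) :=
    fun x => ∑ i : Fin N, ((N : ℝ)⁻¹ • fderiv ℝ (D (emp x)) (x i)).comp
      (ContinuousLinearMap.proj (R := ℝ) (φ := fun _ : Fin N => EuclideanSpace ℝ (Fin d)) i)
    with hL
  have Lapp : ∀ (x w : Fin N → EuclideanSpace ℝ (Fin d)),
      L x w = (N : ℝ)⁻¹ * ∑ k : Fin N, (fderiv ℝ (D (emp x)) (x k)) (w k) := by
    intro x w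
    rw [hL]
    rw [ContinuousLinearMap.sum_apply, Finset.mul_sum]
    refine Finset.sum_congr rfl fun i _ => ?_
    simp [ContinuousLinearMap.comp_apply, ContinuousLinearMap.proj_apply,
      ContinuousLinearMap.smul_apply, smul_eq_mul]
  -- the main derivative claim
  have key : ∀ x : Fin N → EuclideanSpace ℝ (Fin d),
      HasFDerivAt (fun y : Fin N → EuclideanSpace ℝ (Fin d) => u (emp y)) (L x) x := by
    intro x
    rw [hasFDerivAt_iff_isLittleO, Asymptotics.isLittleO_iff]
    intro ε hε
    choose δf hδf using fun i : Fin N => hDVcont (emp x) (pmem_emp hN0 x) (x i) ε hε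
    set δ : ℝ := Finset.univ.inf' Finset.univ_nonempty δf with hδdef
    have hδpos : 0 < δ := (Finset.lt_inf'_iff _).2 fun i _ => (hδf i).1
    rw [Metric.eventually_nhds_iff]
    refine ⟨δ, hδpos, fun y hy => ?_⟩
    rw [dist_eq_norm] at hy
    set M : ℝ := ‖y - x‖ with hMdef
    have hM0 : 0 ≤ M := norm_nonneg _
    have hab : ∀ k, ‖x k - y k‖ ≤ M := by
      intro k
      rw [norm_sub_rev]
      calc ‖y k - x k‖ = ‖(y - x) k‖ := by rw [Pi.sub_apply]
        _ ≤ ‖y - x‖ := norm_le_pi_norm (y - x) k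
    set F : ℝ → ℝ := fun t => (∫ v, D (mix t (emp y) (emp x)) v ∂(emp y))
      - ∫ v, D (mix t (emp y) (emp x)) v ∂(emp x) with hF
    have hu : u (emp y) - u (emp x) = ∫ t in (0:ℝ)..1, F t :=
      hLin (emp y) (emp x) (pmem_emp hN0 y) (pmem_emp hN0 x)
    have hFeq : ∀ t : ℝ, F t = (N : ℝ)⁻¹ * ∑ k : Fin N,
        (D (mix t (emp y) (emp x)) (y k) - D (mix t (emp y) (emp x)) (x k)) := by
      intro t
      rw [hF]
      show (∫ v, D (mix t (emp y) (emp x)) v ∂(emp y))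
        - (∫ v, D (mix t (emp y) (emp x)) v ∂(emp x)) = _
      rw [integral_emp, integral_emp, ← mul_sub, ← Finset.sum_sub_distrib]
    -- continuity in t of D (mix t ...) v
    have contDt : ∀ v : EuclideanSpace ℝ (Fin d),
        ContinuousOn (fun t => D (mix t (emp y) (emp x)) v) (Set.Icc (0:ℝ) 1) := by
      intro v
      rw [Metric.continuousOn_iff]
      intro t₀ ht₀ ε' hε'
      obtain ⟨δ₀, hδ₀, hprop⟩ := hDcont (mix t₀ (emp y) (emp x))
        (pmem_mix hN0 ht₀.1 ht₀.2 y x) v ε' hε'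
      refine ⟨min 1 ((δ₀ / (M + 1)) ^ β), lt_min one_pos
        (Real.rpow_pos_of_pos (by positivity) _), ?_⟩
      intro t ht hdist
      rw [Real.dist_eq] at hdist
      have h1 : Wbeta d β (mix t₀ (emp y) (emp x)) (mix t (emp y) (emp x))
          ≤ |t - t₀| ^ (1/β) * M :=
        wbeta_mix_mix hN0 hβ1 x y ht₀.1 ht₀.2 ht.1 ht.2 hM0 hab
      have h2 : |t - t₀| ^ (1/β) ≤ δ₀ / (M + 1) := by
        have hnn : (0:ℝ) ≤ δ₀ / (M + 1) := by positivity
        calc |t - t₀| ^ (1/β)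
            ≤ (min 1 ((δ₀ / (M + 1)) ^ β)) ^ (1/β) :=
              Real.rpow_le_rpow (abs_nonneg _) (le_of_lt hdist)
                (one_div_nonneg.2 (by linarith))
          _ ≤ ((δ₀ / (M + 1)) ^ β) ^ (1/β) :=
              Real.rpow_le_rpow (le_min zero_le_one (Real.rpow_nonneg hnn _))
                (min_le_right _ _) (one_div_nonneg.2 (by linarith))
          _ = δ₀ / (M + 1) := by
              rw [← Real.rpow_mul hnn, mul_one_div_cancel (by linarith : β ≠ 0),
                Real.rpow_one]
      have h3 : Wbeta d β (mix t₀ (emp y) (emp x)) (mix t (emp y) (emp x)) < δ₀ := by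
        refine lt_of_le_of_lt (h1.trans (mul_le_mul_of_nonneg_right h2 hM0)) ?_
        calc δ₀ / (M + 1) * M < δ₀ / (M + 1) * (M + 1) :=
              mul_lt_mul_of_pos_left (by linarith) (by positivity)
          _ = δ₀ := by field_simp
      have := hprop (mix t (emp y) (emp x)) (pmem_mix hN0 ht.1 ht.2 y x) v h3
        (by simpa using hδ₀)
      rw [Real.dist_eq]
      exact this
    have hFcont : ContinuousOn F (Set.Icc (0:ℝ) 1) := by
      have : F = fun t => (N : ℝ)⁻¹ * ∑ k : Fin N, D (mix t (emp y) (emp x)) (y k)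
          - (N : ℝ)⁻¹ * ∑ k : Fin N, D (mix t (emp y) (emp x)) (x k) := by
        funext t
        rw [hF]
        show (∫ v, D (mix t (emp y) (emp x)) v ∂(emp y))
          - (∫ v, D (mix t (emp y) (emp x)) v ∂(emp x)) = _
        rw [integral_emp, integral_emp]
      rw [this]
      exact (continuousOn_const.mul
          (continuousOn_finset_sum _ fun k _ => contDt (y k))).sub
        (continuousOn_const.mul
          (continuousOn_finset_sum _ fun k _ => contDt (x k)))
    have hIntF : IntervalIntegrable F MeasureTheory.volume 0 1 := by
      apply ContinuousOn.intervalIntegrable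
      rwa [Set.uIcc_of_le zero_le_one]
    -- the pointwise bound
    have hFL : ∀ t ∈ Set.uIoc (0:ℝ) 1, ‖F t - L x (y - x)‖ ≤ ε * M := by
      intro t ht'
      rw [Set.uIoc_of_le zero_le_one] at ht'
      have ht0 : 0 ≤ t := le_of_lt ht'.1
      have ht1 : t ≤ 1 := ht'.2
      have pmemt : Pmem d β (mix t (emp y) (emp x)) := pmem_mix hN0 ht0 ht1 y x
      have hWle : Wbeta d β (emp x) (mix t (emp y) (emp x)) ≤ M :=
        wbeta_emp_mix hN0 hβ1 x y ht0 ht1 hM0 hab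
      have hk : ∀ k : Fin N, ‖D (mix t (emp y) (emp x)) (y k) - D (mix t (emp y) (emp x)) (x k)
          - (fderiv ℝ (D (emp x)) (x k)) (y k - x k)‖ ≤ ε * M := by
        intro k
        have hMδk : M < δf k := lt_of_lt_of_le hy (Finset.inf'_le _ (Finset.mem_univ k))
        have hder : ∀ z ∈ segment ℝ (x k) (y k),
            HasFDerivWithinAt (D (mix t (emp y) (emp x)))
              (fderiv ℝ (D (mix t (emp y) (emp x))) z) (segment ℝ (x k) (y k)) z :=
          fun z _ => ((hDdiff _ pmemt z).hasFDerivAt).hasFDerivWithinAt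
        have hbd : ∀ z ∈ segment ℝ (x k) (y k),
            ‖fderiv ℝ (D (mix t (emp y) (emp x))) z - fderiv ℝ (D (emp x)) (x k)‖ ≤ ε := by
          intro z hz
          have hzx : ‖z - x k‖ ≤ M := by
            rw [segment_eq_image'] at hz
            obtain ⟨θ, hθ, rfl⟩ := hz
            rw [add_sub_cancel_left, norm_smul, Real.norm_eq_abs, abs_of_nonneg hθ.1]
            calc θ * ‖y k - x k‖ ≤ 1 * ‖y k - x k‖ :=
                  mul_le_mul_of_nonneg_right hθ.2 (norm_nonneg _)
              _ = ‖y k - x k‖ := one_mul _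
              _ ≤ M := by rw [norm_sub_rev]; exact hab k
          exact le_of_lt ((hδf k).2 (mix t (emp y) (emp x)) pmemt z
            (lt_of_le_of_lt hWle hMδk) (lt_of_le_of_lt hzx hMδk))
        have hmvt := (convex_segment (x k) (y k)).norm_image_sub_le_of_norm_hasFDerivWithin_le'
          hder hbd (left_mem_segment ℝ (x k) (y k)) (right_mem_segment ℝ (x k) (y k))
        refine hmvt.trans ?_
        exact mul_le_mul_of_nonneg_left (by rw [norm_sub_rev]; exact hab k) (le_of_lt hε)
      rw [hFeq t, Lapp x (y - x), ← mul_sub, ← Finset.sum_sub_distrib]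
      have hyk : ∀ k : Fin N, (y - x) k = y k - x k := fun k => rfl
      rw [Real.norm_eq_abs, abs_mul, abs_of_nonneg (by positivity : (0:ℝ) ≤ (N:ℝ)⁻¹)]
      calc (N : ℝ)⁻¹ * |∑ k : Fin N, (D (mix t (emp y) (emp x)) (y k)
            - D (mix t (emp y) (emp x)) (x k)
            - (fderiv ℝ (D (emp x)) (x k)) ((y - x) k))|
          ≤ (N : ℝ)⁻¹ * ∑ k : Fin N, |D (mix t (emp y) (emp x)) (y k)
            - D (mix t (emp y) (emp x)) (x k)
            - (fderiv ℝ (D (emp x)) (x k)) ((y - x) k)| :=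
            mul_le_mul_of_nonneg_left (Finset.abs_sum_le_sum_abs _ _) (by positivity)
        _ ≤ (N : ℝ)⁻¹ * ∑ _k : Fin N, ε * M := by
            apply mul_le_mul_of_nonneg_left _ (by positivity)
            refine Finset.sum_le_sum fun k _ => ?_
            rw [hyk k]
            exact hk k
        _ = ε * M := by
            rw [Finset.sum_const, Finset.card_univ, Fintype.card_fin, nsmul_eq_mul]
            field_simp
    -- assemble
    have huu : u (emp y) - u (emp x) - L x (y - x)
        = ∫ t in (0:ℝ)..1, (F t - L x (y - x)) := by
      rw [intervalIntegral.integral_sub hIntF intervalIntegrable_const,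
        intervalIntegral.integral_const, hu]
      simp
    show ‖u (emp y) - u (emp x) - L x (y - x)‖ ≤ ε * ‖y - x‖
    rw [huu]
    have := intervalIntegral.norm_integral_le_of_norm_le_const hFL
    simpa using this
  -- continuity of the derivative
  have contL : Continuous L := by
    rw [hL]
    apply continuous_finset_sum
    intro i _
    have hg : Continuous (fun x : Fin N → EuclideanSpace ℝ (Fin d) =>
        fderiv ℝ (D (emp x)) (x i)) := by
      rw [Metric.continuous_iff]
      intro x₀ ε hε
      obtain ⟨δ₀, hδ₀, hprop⟩ := hDVcont (emp x₀) (pmem_emp hN0 x₀) (x₀ i) ε hε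
      refine ⟨δ₀, hδ₀, fun x hx => ?_⟩
      rw [dist_eq_norm] at hx ⊢
      have hab : ∀ k, ‖x₀ k - x k‖ ≤ ‖x - x₀‖ := by
        intro k
        rw [norm_sub_rev]
        calc ‖x k - x₀ k‖ = ‖(x - x₀) k‖ := by rw [Pi.sub_apply]
          _ ≤ ‖x - x₀‖ := norm_le_pi_norm (x - x₀) k
      refine hprop (emp x) (pmem_emp hN0 x) (x i)
        (lt_of_le_of_lt (wbeta_emp_emp hN0 hβ1 x₀ x (norm_nonneg _) hab) hx) ?_
      calc ‖x i - x₀ i‖ = ‖(x - x₀) i‖ := by rw [Pi.sub_apply]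
        _ ≤ ‖x - x₀‖ := norm_le_pi_norm (x - x₀) i
        _ < δ₀ := hx
    have heq : (fun x : Fin N → EuclideanSpace ℝ (Fin d) =>
        ((N : ℝ)⁻¹ • fderiv ℝ (D (emp x)) (x i)).comp
          (ContinuousLinearMap.proj (R := ℝ)
            (φ := fun _ : Fin N => EuclideanSpace ℝ (Fin d)) i))
        = (fun A : EuclideanSpace ℝ (Fin d) →L[ℝ] ℝ =>
            ((ContinuousLinearMap.compL ℝ (Fin N → EuclideanSpace ℝ (Fin d))
              (EuclideanSpace ℝ (Fin d)) ℝ).flip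
              (ContinuousLinearMap.proj (R := ℝ)
                (φ := fun _ : Fin N => EuclideanSpace ℝ (Fin d)) i)) A)
          ∘ (fun x => (N : ℝ)⁻¹ • fderiv ℝ (D (emp x)) (x i)) := rfl
    rw [heq]
    exact (ContinuousLinearMap.continuous _).comp (by exact hg.const_smul ((N : ℝ)⁻¹))
  refine ⟨?_, key⟩
  rw [contDiff_one_iff_fderiv]
  refine ⟨fun x => (key x).differentiableAt, ?_⟩
  have heq2 : fderiv ℝ (fun y : Fin N → EuclideanSpace ℝ (Fin d) => u (emp y)) = L :=
    funext fun x => (key x).fderiv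
  exact heq2 ▸ contL
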